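/- For a simplex σ of the biased derived subdivision Δ' of an induced pair Γ ⊆ Δ, with σ disjoint from Γ and corresponding to a chain σ_1 ⊊ … ⊊ σ_k of simplices of Δ not in Γ, the intersection Γ ∩ st_σ(Δ') equals the set of faces of the simplex σ_1 ∩ V(Γ), which is a simplex of Γ. -/
import Mathlib


open scoped Classical

namespace Fary

variable {V : Type*}

/-- A simplicial complex: a family of finite sets closed under taking subsets. -/
def IsComplex (K : Set (Finset V)) : Prop := ∀ s ∈ K, ∀ t ⊆ s, t ∈ K

/-- The star of a simplex `σ`: all subsets of simplices of `K` containing `σ`. -/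
def star (σ : Finset V) (K : Set (Finset V)) : Set (Finset V) :=
  {t | ∃ ρ ∈ K, σ ⊆ ρ ∧ t ⊆ ρ}

/-- The set of faces of a single simplex `τ`. -/
def facesOf (τ : Finset V) : Set (Finset V) := {ρ | ρ ⊆ τ}

/-- `Γ` is an induced subcomplex of `Δ`. -/
def Induced (Γ Δ : Set (Finset V)) : Prop :=
  Γ ⊆ Δ ∧ ∀ s ∈ Δ, (∀ v ∈ s, {v} ∈ Γ) → s ∈ Γ

/-- `Γ` is a strongly induced subcomplex of `Δ`: for every simplex of `Δ` not in `Γ`,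
the intersection of `Γ` with its star is the set of faces of a single simplex of `Γ`. -/
def StronglyInduced (Γ Δ : Set (Finset V)) : Prop :=
  Γ ⊆ Δ ∧ ∀ σ ∈ Δ, σ ∉ Γ → ∃ τ ∈ Γ, Γ ∩ star σ Δ = facesOf τ

/-- The derived (barycentric) subdivision: its simplices are the chains (under inclusion)
of nonempty simplices of `Δ`. -/
def derived (Δ : Set (Finset V)) : Set (Finset (Finset V)) :=
  {C | (↑C : Set (Finset V)) ⊆ {s | s ∈ Δ ∧ s.Nonempty} ∧
       IsChain (· ⊆ ·) (↑C : Set (Finset V))}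

/-- The biased derived subdivision of a pair `Γ ⊆ Δ`: simplices are
`τ ∪ {v_{σ₁}, …, v_{σ_k}}` with `τ ∈ Γ`, `σ₁ ⊂ … ⊂ σ_k` simplices of `Δ` not in `Γ`
and `τ ⊆ σ₁`. Old vertices are `Sum.inl`, the new vertex `v_σ` is `Sum.inr σ`. -/
def biased [DecidableEq V] (Γ Δ : Set (Finset V)) : Set (Finset (V ⊕ Finset V)) :=
  {t | ∃ τ ∈ Γ, ∃ C : Finset (Finset V),
    (↑C : Set (Finset V)) ⊆ {s | s ∈ Δ ∧ s ∉ Γ} ∧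
    IsChain (· ⊆ ·) (↑C : Set (Finset V)) ∧
    (∀ s ∈ C, τ ⊆ s) ∧
    t = τ.image Sum.inl ∪ C.image Sum.inr}

/-- The copy of a complex `Γ` over `V` inside the vertex type `V ⊕ Finset V`. -/
def inlify [DecidableEq V] (Γ : Set (Finset V)) : Set (Finset (V ⊕ Finset V)) :=
  {t | ∃ s ∈ Γ, t = s.image Sum.inl}

/-- The vertex map of the edge contraction identifying `b` with `a`. -/
def cmap [DecidableEq V] (a b : V) (v : V) : V := if v = b then a else v

/-- The edge contraction `C_e(K)` at `e = {a,b}`: images of simplices under `cmap a b`. -/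
def contract [DecidableEq V] (a b : V) (K : Set (Finset V)) : Set (Finset V) :=
  {t | ∃ s ∈ K, t = s.image (cmap a b)}

/-- A missing simplex of `K`: not a simplex, but all proper subsets are simplices. -/
def Missing (K : Set (Finset V)) (m : Finset V) : Prop := m ∉ K ∧ ∀ t ⊂ m, t ∈ K

/-- The stellar subdivision of `Δ` at `σ`, with new vertex `none`. -/
def stellar [DecidableEq V] (σ : Finset V) (Δ : Set (Finset V)) : Set (Finset (Option V)) :=
  {t | (∃ s ∈ Δ, ¬ σ ⊆ s ∧ t = s.image some) ∨
       (∃ τ ρ : Finset V, τ ⊂ σ ∧ ρ ∩ σ = ∅ ∧ σ ∪ ρ ∈ Δ ∧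
         t = insert none ((τ ∪ ρ).image some))}

/-- The edge subdivision `S_e` at the edge `e = {a,b}` is the stellar subdivision at `e`. -/
def subdivEdge [DecidableEq V] (a b : V) (K : Set (Finset V)) : Set (Finset (Option V)) :=
  stellar {a, b} K

/-- `s` is a facet (maximal simplex) of `K`. -/
def IsFacet (K : Set (Finset V)) (s : Finset V) : Prop :=
  s ∈ K ∧ ∀ t ∈ K, s ⊆ t → t = s

end Fary

namespace Fary

/-- for a simplex of the biased derived subdivision disjoint from `Γ`,
corresponding to a chain `σ₁ ⊊ … ⊊ σ_k`, the intersection of `Γ` with its star is the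
set of faces of the simplex `σ₁ ∩ V(Γ)`, which is a simplex of `Γ`. -/
theorem biased_star_inter {V : Type*} [DecidableEq V] (Γ Δ : Set (Finset V))
    (hΓ : IsComplex Γ) (hΔ : IsComplex Δ) (hind : Induced Γ Δ) (hempty : ∅ ∈ Γ)
    (C : Finset (Finset V)) (hCne : C.Nonempty)
    (hC : (↑C : Set (Finset V)) ⊆ {s | s ∈ Δ ∧ s ∉ Γ})
    (hchain : IsChain (· ⊆ ·) (↑C : Set (Finset V)))
    (σ₁ : Finset V) (hσ₁ : σ₁ ∈ C) (hmin : ∀ s ∈ C, σ₁ ⊆ s) :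
    (σ₁.filter fun v => {v} ∈ Γ) ∈ Γ ∧
    inlify Γ ∩ star (C.image Sum.inr) (biased Γ Δ)
      = facesOf ((σ₁.filter fun v => {v} ∈ Γ).image Sum.inl) := by
  set τ₀ : Finset V := σ₁.filter fun v => {v} ∈ Γ with hτ₀
  have hσ₁Δ : σ₁ ∈ Δ := (hC hσ₁).1
  have hτ₀Γ : τ₀ ∈ Γ := by
    refine hind.2 τ₀ (hΔ σ₁ hσ₁Δ τ₀ (Finset.filter_subset _ _)) ?_
    intro v hv
    exact (Finset.mem_filter.mp hv).2
  refine ⟨hτ₀Γ, ?_⟩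
  ext t
  constructor
  · rintro ⟨⟨s, hsΓ, rfl⟩, ρ, ⟨τ, hτΓ, D, hD, hDchain, hτD, rfl⟩, hCρ, htρ⟩
    -- σ₁ ∈ D
    have hσ₁D : σ₁ ∈ D := by
      have := hCρ (Finset.mem_image_of_mem Sum.inr hσ₁)
      rcases Finset.mem_union.mp this with h | h
      · rcases Finset.mem_image.mp h with ⟨v, _, hv⟩; exact absurd hv (by simp)
      · rcases Finset.mem_image.mp h with ⟨u, hu, hv⟩
        obtain rfl : u = σ₁ := Sum.inr_injective hv
        exact hu
    have hsτ : s ⊆ τ := by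
      intro v hv
      have := htρ (Finset.mem_image_of_mem Sum.inl hv)
      rcases Finset.mem_union.mp this with h | h
      · rcases Finset.mem_image.mp h with ⟨u, hu, hvu⟩
        obtain rfl : u = v := Sum.inl_injective hvu
        exact hu
      · rcases Finset.mem_image.mp h with ⟨u, _, hvu⟩; exact absurd hvu (by simp)
    have hsub : s ⊆ τ₀ := by
      intro v hv
      refine Finset.mem_filter.mpr ⟨(hτD σ₁ hσ₁D) (hsτ hv), ?_⟩
      exact hΓ s hsΓ {v} (Finset.singleton_subset_iff.mpr hv)
    exact Finset.image_subset_image hsub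
  · intro ht
    have ht' : t ⊆ τ₀.image Sum.inl := ht
    rcases Finset.subset_image_iff.mp ht' with ⟨s, hsτ₀, rfl⟩
    have hsΓ : s ∈ Γ := hΓ τ₀ hτ₀Γ s hsτ₀
    refine ⟨⟨s, hsΓ, rfl⟩, τ₀.image Sum.inl ∪ C.image Sum.inr, ?_, ?_, ?_⟩
    · exact ⟨τ₀, hτ₀Γ, C, hC, hchain,
        fun u hu => (Finset.filter_subset _ _).trans (hmin u hu), rfl⟩
    · exact Finset.subset_union_right
    · exact (Finset.image_subset_image hsτ₀).trans Finset.subset_union_left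

end Fary
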